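/- Let W ⊆ O be closed, let o be a maximal element of W (i.e. no element of W is strictly greater than o), and let i' ∈ I satisfy τ i' = o. If v ∈ DS_W and v i' = 0, then v i = 0 for every i ∈ I with τ i = o; consequently v ∈ DS_{W'} where W' = W \ {o}. (This is the key inductive step in the proof of Corollary 3 of the paper.) -/
import Mathlib


/-- key inductive step in Corollary 3: if `o` is maximal in the closed set
`W`, `τ i' = o`, and `u ∈ DS_W` vanishes at `i'`, then `u` vanishes at every index with
DeBacker lift `o`, hence `u ∈ DS_{W \ {o}}`. -/
theorem stmt2 {O I : Type*} [Fintype O] [PartialOrder O]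
    (τ : I → O) (hτ : Function.Surjective τ)
    (v : O → I → ℚ)
    (h1 : ∀ o i, τ i ≤ o → v o i ≠ 0)
    (h2 : ∀ o i, ¬ τ i ≤ o → v o i = 0)
    (c : I → I → ℚ) (c' : I → I → (I →₀ ℚ))
    (hc : ∀ i₀ i₁, τ i₀ = τ i₁ → c i₀ i₁ ≠ 0)
    (hc' : ∀ i₀ i₁, τ i₀ = τ i₁ → ∀ j ∈ (c' i₀ i₁).support, τ i₀ < τ j)
    (hrel : ∀ i₀ i₁, τ i₀ = τ i₁ → ∀ o,
      v o i₁ = c i₀ i₁ * v o i₀ + (c' i₀ i₁).sum fun j a => a * v o j)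
    (W : Set O) (hW : ∀ o₁ ∈ W, ∀ o₂, o₂ ≤ o₁ → o₂ ∈ W)
    (o : O) (hoW : o ∈ W) (homax : ∀ o' ∈ W, ¬ o < o')
    (i' : I) (hi' : τ i' = o)
    (u : I → ℚ)
    (hu1 : ∀ i, τ i ∉ W → u i = 0)
    (hu2 : ∀ i₀ i₁, τ i₀ = τ i₁ →
      u i₁ = c i₀ i₁ * u i₀ + (c' i₀ i₁).sum fun j a => a * u j)
    (hu0 : u i' = 0) :
    (∀ i, τ i = o → u i = 0) ∧
      ((∀ i, τ i ∉ W \ {o} → u i = 0) ∧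
        ∀ i₀ i₁, τ i₀ = τ i₁ →
          u i₁ = c i₀ i₁ * u i₀ + (c' i₀ i₁).sum fun j a => a * u j) := by
  have key : ∀ i, τ i = o → u i = 0 := by
    intro i hi
    have h := hu2 i' i (by rw [hi', hi])
    rw [hu0, mul_zero, zero_add] at h
    rw [h, Finsupp.sum]
    apply Finset.sum_eq_zero
    intro j hj
    have hlt := hc' i' i (by rw [hi', hi]) j hj
    rw [hi'] at hlt
    have : τ j ∉ W := fun hmem => homax (τ j) hmem hlt
    rw [hu1 j this, mul_zero]
  refine ⟨key, ⟨?_, hu2⟩⟩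
  intro i hi
  by_cases h : τ i ∈ W
  · exact key i (by by_contra hne; exact hi ⟨h, hne⟩)
  · exact hu1 i h
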